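/- The unit square X = [0,1] × [0,1] equipped with the order topology induced by the lexicographic order admits no orbit expansive homeomorphism. -/

import Mathlib

open Set

/-- The `n`-th iterate (`n : ℤ`) of a homeomorphism `f`, as a function. -/
def Homeomorph.zpow {X : Type*} [TopologicalSpace X] (f : X ≃ₜ X) (n : ℤ) : X → X :=
  ⇑(f.toEquiv ^ n)

/-- `U = {U 0, …, U (l-1)}` is an o-expansive covering for the homeomorphism `f`:
it is a finite open cover such that any two points whose whole orbits stay
`U`-close must coincide. -/
def IsOExpansiveCover {X : Type*} [TopologicalSpace X] {l : ℕ} (f : X ≃ₜ X)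
    (U : Fin l → Set X) : Prop :=
  (∀ i, IsOpen (U i)) ∧ (⋃ i, U i) = Set.univ ∧
    ∀ x y : X, (∀ n : ℤ, ∃ i, f.zpow n x ∈ U i ∧ f.zpow n y ∈ U i) → x = y

/-- A homeomorphism is orbit expansive if it admits an o-expansive covering. -/
def OrbitExpansive {X : Type*} [TopologicalSpace X] (f : X ≃ₜ X) : Prop :=
  ∃ (l : ℕ) (U : Fin l → Set X), IsOExpansiveCover f U

/-- `U` is an r-expansivity covering for `f`: a finite open cover such that for every
open cover `V` and every sequence `k : ℤ → Fin n` there is `N` with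
`⋂_{|j| ≤ N} f^j(U (k j))` contained in a member of `V`. -/
def IsRExpansiveCover {X : Type*} [TopologicalSpace X] {n : ℕ} (f : X ≃ₜ X)
    (U : Fin n → Set X) : Prop :=
  (∀ i, IsOpen (U i)) ∧ (⋃ i, U i) = Set.univ ∧
    ∀ V : Set (Set X), (∀ v ∈ V, IsOpen v) → ⋃₀ V = Set.univ →
      ∀ k : ℤ → Fin n, ∃ N : ℕ, ∃ v ∈ V,
        (⋂ j ∈ Set.Icc (-(N : ℤ)) (N : ℤ), f.zpow j '' U (k j)) ⊆ v

/-- A homeomorphism is refinement expansive if it admits an r-expansivity covering. -/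
def RefinementExpansive {X : Type*} [TopologicalSpace X] (f : X ≃ₜ X) : Prop :=
  ∃ (n : ℕ) (U : Fin n → Set X), IsRExpansiveCover f U

/-- `U` is a uniform r-expansivity covering for `f`: `N` can be chosen uniformly in the
sequence `k`. -/
def IsUniformRExpansiveCover {X : Type*} [TopologicalSpace X] {n : ℕ} (f : X ≃ₜ X)
    (U : Fin n → Set X) : Prop :=
  (∀ i, IsOpen (U i)) ∧ (⋃ i, U i) = Set.univ ∧
    ∀ V : Set (Set X), (∀ v ∈ V, IsOpen v) → ⋃₀ V = Set.univ →
      ∃ N : ℕ, ∀ k : ℤ → Fin n, ∃ v ∈ V,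
        (⋂ j ∈ Set.Icc (-(N : ℤ)) (N : ℤ), f.zpow j '' U (k j)) ⊆ v

/-- A homeomorphism is uniformly refinement expansive if it admits a uniform
r-expansivity covering. -/
def UniformlyRefinementExpansive {X : Type*} [TopologicalSpace X] (f : X ≃ₜ X) : Prop :=
  ∃ (n : ℕ) (U : Fin n → Set X), IsUniformRExpansiveCover f U

private lemma continuous_equiv_pow {X : Type*} [TopologicalSpace X] (f : X ≃ₜ X) (m : ℕ) :
    Continuous ⇑(f.toEquiv ^ m) := by
  induction m with
  | zero => simpa using continuous_id
  | succ k ih =>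
    rw [pow_succ]
    have : ⇑(f.toEquiv ^ k * f.toEquiv) = ⇑(f.toEquiv ^ k) ∘ ⇑f.toEquiv := by
      ext x; rfl
    rw [this]
    exact ih.comp f.continuous

lemma Homeomorph.continuous_zpow' {X : Type*} [TopologicalSpace X] (f : X ≃ₜ X) (n : ℤ) :
    Continuous (f.zpow n) := by
  unfold Homeomorph.zpow
  cases n with
  | ofNat m =>
    rw [Int.ofNat_eq_natCast, zpow_natCast]
    exact continuous_equiv_pow f m
  | negSucc m =>
    rw [zpow_negSucc, ← inv_pow]
    have h : f.toEquiv⁻¹ = f.symm.toEquiv := rfl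
    rw [h]
    exact continuous_equiv_pow f.symm (m + 1)

private lemma exists_right_accum {T : Set ℝ} (hT : ¬ T.Countable) :
    ∃ c ∈ T, ∀ ε > (0:ℝ), ∃ t ∈ T, c < t ∧ t < c + ε := by
  by_contra h
  push_neg at h
  apply hT
  have hsub : T ⊆ ⋃ q : ℚ, {t | t ∈ T ∧ t < (q:ℝ) ∧ ∀ s ∈ T, ¬(t < s ∧ s < (q:ℝ))} := by
    intro c hc
    obtain ⟨ε, hε, hno⟩ := h c hc
    obtain ⟨q, hq1, hq2⟩ := exists_rat_btwn (show c < c + ε by linarith)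
    refine Set.mem_iUnion.2 ⟨q, hc, hq1, fun s hs hcs => ?_⟩
    have := hno s hs hcs.1
    linarith [hcs.2]
  refine Set.Countable.mono hsub (Set.countable_iUnion fun q => ?_)
  apply Set.Subsingleton.countable
  intro a ha b hb
  by_contra hne
  rcases lt_or_gt_of_ne hne with hab | hba
  · exact ha.2.2 b hb.1 ⟨hab, hb.2.1⟩
  · exact hb.2.2 a ha.1 ⟨hba, ha.2.1⟩

private lemma Ioo_not_countable : ¬ (Set.Ioo (0:ℝ) (1/2)).Countable := by
  intro h
  have := h.le_aleph0
  rw [Cardinal.mk_Ioo_real (by norm_num : (0:ℝ) < 1/2)] at this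
  exact absurd this (not_le.2 Cardinal.aleph0_lt_continuum)


/-- Remark 2.8: the unit square with the lexicographic order topology admits no
orbit expansive homeomorphism. -/
theorem lexSquare_no_orbitExpansive :
    letI X := Set.Icc (0 : ℝ) 1 ×ₗ Set.Icc (0 : ℝ) 1
    letI : TopologicalSpace X := Preorder.topology X
    ∀ f : X ≃ₜ X, ¬ OrbitExpansive f := by
  intro f hf
  letI : TopologicalSpace (Set.Icc (0 : ℝ) 1 ×ₗ Set.Icc (0 : ℝ) 1) :=
    Preorder.topology (Set.Icc (0 : ℝ) 1 ×ₗ Set.Icc (0 : ℝ) 1)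
  haveI : OrderTopology (Set.Icc (0 : ℝ) 1 ×ₗ Set.Icc (0 : ℝ) 1) := ⟨rfl⟩
  classical
  obtain ⟨l, U, hopen, hcover, hexp⟩ := hf
  have mem01 : ∀ t : ℝ, max 0 (min t 1) ∈ Set.Icc (0:ℝ) 1 := fun t =>
    ⟨le_max_left _ _, max_le (by norm_num) (min_le_right _ _)⟩
  set cl : ℝ → Set.Icc (0:ℝ) 1 := fun t => ⟨max 0 (min t 1), mem01 t⟩ with hcl_def
  have hcl : ∀ t : ℝ, 0 ≤ t → t ≤ 1 → (cl t : ℝ) = t := fun t h0 h1 => by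
    simp only [hcl_def]
    rw [min_eq_left h1, max_eq_right h0]
  have z0 : (0:ℝ) ∈ Set.Icc (0:ℝ) 1 := by norm_num
  have z1 : (1:ℝ) ∈ Set.Icc (0:ℝ) 1 := by norm_num
  set uu : ℝ → Set.Icc (0 : ℝ) 1 ×ₗ Set.Icc (0 : ℝ) 1 := fun t => toLex (cl t, ⟨0, z0⟩) with huu
  set vv : ℝ → Set.Icc (0 : ℝ) 1 ×ₗ Set.Icc (0 : ℝ) 1 := fun t => toLex (cl t, ⟨1, z1⟩) with hvv
  have huvne : ∀ t, uu t ≠ vv t := by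
    intro t h
    have := congrArg (fun z : Set.Icc (0 : ℝ) 1 ×ₗ Set.Icc (0 : ℝ) 1 => ((ofLex z).2 : ℝ)) h
    simp [huu, hvv] at this
  have key : ∀ t : ℝ, ∃ m : ℤ, ∀ i, ¬(f.zpow m (uu t) ∈ U i ∧ f.zpow m (vv t) ∈ U i) := by
    intro t
    by_contra hcon
    push_neg at hcon
    exact huvne t (hexp _ _ hcon)
  choose nf hnf using key
  have hpig : ∃ m : ℤ, ¬ {t | t ∈ Set.Ioo (0:ℝ) (1/2) ∧ nf t = m}.Countable := by
    by_contra hc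
    push_neg at hc
    apply Ioo_not_countable
    refine (Set.countable_iUnion hc).mono fun t ht => Set.mem_iUnion.2 ⟨nf t, ?_⟩
    exact ⟨ht, rfl⟩
  obtain ⟨m0, hTc⟩ := hpig
  obtain ⟨c, ⟨hcS, hcn⟩, hacc⟩ := exists_right_accum hTc
  have hc0 : 0 < c := hcS.1
  have hc2 : c < 1/2 := hcS.2
  have hclc : (cl c : ℝ) = c := hcl c hc0.le (by linarith)
  have gcont : Continuous (f.zpow m0) := f.continuous_zpow' m0
  obtain ⟨i0, hi0⟩ : ∃ i, f.zpow m0 (vv c) ∈ U i := by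
    have : f.zpow m0 (vv c) ∈ ⋃ i, U i := by rw [hcover]; trivial
    exact Set.mem_iUnion.1 this
  have hV : IsOpen (f.zpow m0 ⁻¹' U i0) := (hopen i0).preimage gcont
  have hnb : f.zpow m0 ⁻¹' U i0 ∈ nhds (vv c) := hV.mem_nhds hi0
  have hex : ∃ w, vv c < w := by
    refine ⟨toLex (⟨1, z1⟩, ⟨1, z1⟩), ?_⟩
    rw [hvv]
    rw [Prod.Lex.lt_iff]
    left
    rw [← Subtype.coe_lt_coe]
    simp only [ofLex_toLex]
    rw [hclc]
    norm_num
    linarith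
  obtain ⟨w, hpw, hIco⟩ := exists_Ico_subset_of_mem_nhds hnb hex
  set d : ℝ := ((ofLex w).1 : ℝ) with hd
  have hcd : c < d := by
    have h1 : toLex (cl c, (⟨1, z1⟩ : Set.Icc (0:ℝ) 1)) < toLex (ofLex w) := hpw
    rw [Prod.Lex.lt_iff] at h1
    rcases h1 with h1 | ⟨heq, h2⟩
    · have := Subtype.coe_lt_coe.2 h1
      simp only [ofLex_toLex] at this
      rwa [hclc] at this
    · exfalso
      have h3 := Subtype.coe_lt_coe.2 h2
      have hle := ((ofLex w).2).2.2
      simp only [Subtype.coe_mk, ofLex_toLex] at h3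
      have : (1:ℝ) < ((ofLex w).2 : ℝ) := h3
      linarith
  obtain ⟨t, ⟨htS, htn⟩, hct, htd⟩ := hacc (d - c) (by linarith)
  have htd' : t < d := by linarith
  have ht0 : 0 ≤ t := (htS.1).le
  have ht1 : t ≤ 1 := by have := htS.2; linarith
  have hclt : (cl t : ℝ) = t := hcl t ht0 ht1
  have hmemu : uu t ∈ f.zpow m0 ⁻¹' U i0 := by
    apply hIco
    constructor
    · apply le_of_lt
      show toLex (cl c, (⟨1,z1⟩ : Set.Icc (0:ℝ) 1)) < toLex (cl t, (⟨0,z0⟩ : Set.Icc (0:ℝ) 1))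
      rw [Prod.Lex.lt_iff]
      left
      rw [← Subtype.coe_lt_coe, ofLex_toLex, ofLex_toLex, hclc, hclt]
      exact hct
    · show toLex (cl t, (⟨0,z0⟩ : Set.Icc (0:ℝ) 1)) < toLex (ofLex w)
      rw [Prod.Lex.lt_iff]
      left
      rw [← Subtype.coe_lt_coe, ofLex_toLex, ofLex_toLex, hclt]
      exact htd'
  have hmemv : vv t ∈ f.zpow m0 ⁻¹' U i0 := by
    apply hIco
    constructor
    · apply le_of_lt
      show toLex (cl c, (⟨1,z1⟩ : Set.Icc (0:ℝ) 1)) < toLex (cl t, (⟨1,z1⟩ : Set.Icc (0:ℝ) 1))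
      rw [Prod.Lex.lt_iff]
      left
      rw [← Subtype.coe_lt_coe, ofLex_toLex, ofLex_toLex, hclc, hclt]
      exact hct
    · show toLex (cl t, (⟨1,z1⟩ : Set.Icc (0:ℝ) 1)) < toLex (ofLex w)
      rw [Prod.Lex.lt_iff]
      left
      rw [← Subtype.coe_lt_coe, ofLex_toLex, ofLex_toLex, hclt]
      exact htd'
  have hfin := hnf t i0
  rw [htn] at hfin
  exact hfin ⟨hmemu, hmemv⟩
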